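/- If G is a precompact (totally bounded) topological group with a countable Pytkeev network, then G is metrizable and separable. -/

import Mathlib

open Set Filter Topology TopologicalSpace

/-- A set `A` accumulates at `x` if every neighborhood of `x` contains
infinitely many points of `A`. -/
def AccumulatesAt {X : Type*} [TopologicalSpace X] (A : Set X) (x : X) : Prop :=
  ∀ U ∈ 𝓝 x, (U ∩ A).Infinite

/-- `𝒩` is a network: for each point and open neighborhood there is a member of `𝒩`
containing the point and contained in the neighborhood. -/
def IsNetwork {X : Type*} [TopologicalSpace X] (𝒩 : Set (Set X)) : Prop :=
  ∀ (x : X) (U : Set X), IsOpen U → x ∈ U → ∃ N ∈ 𝒩, x ∈ N ∧ N ⊆ U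

/-- `𝒩` is a Pytkeev network. -/
def IsPytkeevNetwork {X : Type*} [TopologicalSpace X] (𝒩 : Set (Set X)) : Prop :=
  IsNetwork 𝒩 ∧ ∀ (x : X) (U : Set X), IsOpen U → x ∈ U →
    ∀ A : Set X, AccumulatesAt A x → ∃ N ∈ 𝒩, N ⊆ U ∧ (N ∩ A).Infinite

/-- `𝒩` is a k-network. -/
def IsKNetwork {X : Type*} [TopologicalSpace X] (𝒩 : Set (Set X)) : Prop :=
  ∀ (U K : Set X), IsOpen U → IsCompact K → K ⊆ U →
    ∃ F ⊆ 𝒩, F.Finite ∧ K ⊆ ⋃₀ F ∧ ⋃₀ F ⊆ U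

open Uniformity Pointwise


section Chain

variable {α : Type*}

noncomputable def chainL (p : List α → α) : ℕ → List α
  | 0 => []
  | n + 1 => chainL p n ++ [p (chainL p n)]

lemma chainL_length (p : List α → α) : ∀ n, (chainL p n).length = n
  | 0 => rfl
  | n + 1 => by simp [chainL, chainL_length p n]

lemma mem_chainL (p : List α → α) :
    ∀ (n : ℕ) (x : α), x ∈ chainL p n ↔ ∃ i, i < n ∧ x = p (chainL p i)
  | 0, x => by simp [chainL]
  | n + 1, x => by
    simp only [chainL, List.mem_append, List.mem_singleton, mem_chainL p n]
    constructor
    · rintro (⟨i, hi, rfl⟩ | rfl)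
      exacts [⟨i, Nat.lt_succ_of_lt hi, rfl⟩, ⟨n, Nat.lt_succ_self n, rfl⟩]
    · rintro ⟨i, hi, rfl⟩
      rcases Nat.lt_succ_iff_lt_or_eq.mp hi with h | rfl
      exacts [Or.inl ⟨i, h, rfl⟩, Or.inr rfl]

lemma exists_avoiding_seq {α : Type*} (R : ℕ → α → Set α)
    (hH : ∀ l : List α, ∃ x, x ∉ l ∧ ∀ y ∈ l, x ∉ R l.length y) :
    ∃ d : ℕ → α, Function.Injective d ∧ ∀ i j, i < j → d j ∉ R j (d i) := by
  choose p hp1 hp2 using hH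
  refine ⟨fun i => p (chainL p i), ?_, ?_⟩
  · intro i j hij
    dsimp only at hij
    by_contra hne
    rcases lt_or_gt_of_ne hne with h | h
    · have hm : p (chainL p i) ∈ chainL p j := (mem_chainL p j _).mpr ⟨i, h, rfl⟩
      rw [hij] at hm
      exact hp1 (chainL p j) hm
    · have hm : p (chainL p j) ∈ chainL p i := (mem_chainL p i _).mpr ⟨j, h, rfl⟩
      rw [← hij] at hm
      exact hp1 (chainL p i) hm
  · intro i j hij
    have hmem : p (chainL p i) ∈ chainL p j := (mem_chainL p j _).mpr ⟨i, hij, rfl⟩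
    have := hp2 (chainL p j) _ hmem
    simpa only [chainL_length p j] using this

end Chain

section Nwd

variable {X : Type*} [TopologicalSpace X]

lemma interior_union_eq_empty' {s t : Set X} (hs : IsClosed s)
    (hsi : interior s = ∅) (hti : interior t = ∅) : interior (s ∪ t) = ∅ := by
  have h1 : interior (s ∪ t) \ s ⊆ interior t := by
    have : IsOpen (interior (s ∪ t) \ s) := isOpen_interior.sdiff hs
    exact interior_maximal (fun y hy => (interior_subset hy.1).resolve_left hy.2) this
  have h2 : interior (s ∪ t) ⊆ s := by
    intro x hx
    by_contra hxs
    exact absurd (h1 ⟨hx, hxs⟩) (by simp [hti])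
  have := interior_maximal h2 isOpen_interior
  rw [hsi] at this
  exact eq_empty_iff_forall_notMem.mpr fun x hx => this (by simpa using hx)

lemma interior_biUnion_finset_empty {ι : Type*} (F : Finset ι) (f : ι → Set X)
    (hcl : ∀ i ∈ F, IsClosed (f i)) (hint : ∀ i ∈ F, interior (f i) = ∅) :
    IsClosed (⋃ i ∈ F, f i) ∧ interior (⋃ i ∈ F, f i) = ∅ := by
  classical
  induction F using Finset.induction with
  | empty => simp
  | @insert a F ha ih =>
      rw [Finset.set_biUnion_insert]
      have hih := ih (fun i hi => hcl i (Finset.mem_insert_of_mem hi))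
        (fun i hi => hint i (Finset.mem_insert_of_mem hi))
      exact ⟨(hcl a (Finset.mem_insert_self a F)).union hih.1,
        interior_union_eq_empty' (hcl a (Finset.mem_insert_self a F))
          (hint a (Finset.mem_insert_self a F)) hih.2⟩

end Nwd

section Main

variable {G : Type*} [Group G] [TopologicalSpace G] [IsTopologicalGroup G] [T3Space G]

/-- In an infinite group satisfying the precompactness hypothesis, every neighborhood of 1
is infinite. -/
lemma nhds_one_infinite [Infinite G]
    (hpre : ∀ U ∈ 𝓝 (1 : G), ∃ F : Set G, F.Finite ∧
      ∀ g : G, ∃ f ∈ F, ∃ u ∈ U, g = f * u) :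
    ∀ U ∈ 𝓝 (1 : G), U.Infinite := by
  intro U hU
  by_contra hfinU
  rw [Set.not_infinite] at hfinU
  have h1 : ({1} : Set G) ∈ 𝓝 (1 : G) := by
    have hclosed : IsClosed (U \ {1}) := (hfinU.subset diff_subset).isClosed
    have hc : (U \ {1})ᶜ ∈ 𝓝 (1 : G) := hclosed.isOpen_compl.mem_nhds (by simp)
    refine mem_of_superset (inter_mem hU hc) ?_
    rintro x ⟨hxU, hxc⟩
    simp only [mem_compl_iff, mem_diff, not_and, not_not] at hxc
    simpa using hxc hxU
  obtain ⟨F, hF, hcov⟩ := hpre {1} h1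
  have huniv : (univ : Set G).Finite := by
    refine hF.subset fun g _ => ?_
    obtain ⟨f, hf, u, hu, hgu⟩ := hcov g
    simp only [mem_singleton_iff] at hu
    subst hu; simpa [hgu] using hf
  exact absurd huniv Set.infinite_univ

lemma nhds_infinite [Infinite G]
    (hpre : ∀ U ∈ 𝓝 (1 : G), ∃ F : Set G, F.Finite ∧
      ∀ g : G, ∃ f ∈ F, ∃ u ∈ U, g = f * u) :
    ∀ (x : G) (U : Set G), U ∈ 𝓝 x → U.Infinite := by
  intro x U hU
  rw [← map_mul_left_nhds_one x, mem_map] at hU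
  have hinf := nhds_one_infinite hpre _ hU
  have himg : (fun y => x * y) '' ((fun y => x * y) ⁻¹' U) ⊆ U := image_preimage_subset _ _
  exact (hinf.image (Set.injOn_of_injective (mul_right_injective x))).mono himg

/-- Differences of an infinite set accumulate at the identity (precompactness). -/
lemma accumulates_diff [Infinite G]
    (hpre : ∀ U ∈ 𝓝 (1 : G), ∃ F : Set G, F.Finite ∧
      ∀ g : G, ∃ f ∈ F, ∃ u ∈ U, g = f * u)
    (D : Set G) (hD : D.Infinite) :
    AccumulatesAt {x | ∃ a ∈ D, ∃ b ∈ D, a⁻¹ * b = x} (1 : G) := by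
  intro U hU
  obtain ⟨V₀, hV₀, hV₀U⟩ := exists_nhds_split_inv hU
  set V := V₀ ∩ V₀⁻¹ with hVdef
  have hV : V ∈ 𝓝 (1 : G) := inter_mem hV₀ (inv_mem_nhds_one G hV₀)
  have hVU : ∀ u ∈ V, ∀ w ∈ V, u⁻¹ * w ∈ U := by
    intro u hu w hw
    have h1 : u⁻¹ ∈ V₀ := hu.2
    have h2 : w⁻¹ ∈ V₀ := hw.2
    have := hV₀U _ h1 _ h2
    simpa [div_eq_mul_inv] using this
  obtain ⟨F, hF, hcov⟩ := hpre V hV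
  have hsub : D ⊆ ⋃ f ∈ F, {g ∈ D | ∃ u ∈ V, g = f * u} := by
    intro g hg
    obtain ⟨f, hf, u, hu, hgu⟩ := hcov g
    exact mem_biUnion hf ⟨hg, u, hu, hgu⟩
  have hpiece : ∃ f ∈ F, {g ∈ D | ∃ u ∈ V, g = f * u}.Infinite := by
    by_contra h
    push_neg at h
    exact hD ((hF.biUnion fun f hf => h f hf).subset hsub)
  obtain ⟨f, hf, hinf⟩ := hpiece
  obtain ⟨a₀, ha₀⟩ := hinf.nonempty
  have himg : (fun b => a₀⁻¹ * b) '' {g ∈ D | ∃ u ∈ V, g = f * u} ⊆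
      U ∩ {x | ∃ a ∈ D, ∃ b ∈ D, a⁻¹ * b = x} := by
    rintro x ⟨b, ⟨hbD, u, hu, hbu⟩, rfl⟩
    obtain ⟨ha₀D, u₀, hu₀, ha₀eq⟩ := ha₀
    refine ⟨?_, ⟨a₀, ha₀D, b, hbD, rfl⟩⟩
    show a₀⁻¹ * b ∈ U
    have heq : a₀⁻¹ * b = u₀⁻¹ * u := by rw [ha₀eq, hbu]; group
    rw [heq]
    exact hVU u₀ hu₀ u hu
  exact ((hinf.image (Set.injOn_of_injective (mul_right_injective a₀⁻¹))).mono himg)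

end Main

section Main2

variable {G : Type*} [Group G] [TopologicalSpace G] [IsTopologicalGroup G] [T3Space G]

set_option maxHeartbeats 1000000 in
lemma nhds_one_isCountablyGenerated
    (hpre : ∀ U ∈ 𝓝 (1 : G), ∃ F : Set G, F.Finite ∧
      ∀ g : G, ∃ f ∈ F, ∃ u ∈ U, g = f * u)
    (𝒩 : Set (Set G)) (hc : 𝒩.Countable) (hP : IsPytkeevNetwork 𝒩) :
    (𝓝 (1 : G)).IsCountablyGenerated := by
  classical
  obtain ⟨hnet, hpyt⟩ := hP
  by_cases hfin : (univ : Set G).Finite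
  · haveI : Finite G := Set.finite_univ_iff.mp hfin
    rw [nhds_discrete G]
    exact isCountablyGenerated_pure 1
  haveI : Infinite G := Set.infinite_univ_iff.mp hfin
  have hOpenInf : ∀ V : Set G, IsOpen V → V.Nonempty → V.Infinite := by
    rintro V hV ⟨x, hx⟩
    exact nhds_infinite hpre x V (hV.mem_nhds hx)
  have h𝒩ne : 𝒩.Nonempty := by
    obtain ⟨N, hN, -, -⟩ := hnet 1 univ isOpen_univ (mem_univ 1)
    exact ⟨N, hN⟩
  obtain ⟨e, he⟩ := hc.exists_eq_range h𝒩ne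
  by_cases hQ : ∀ U ∈ 𝓝 (1 : G), ∃ n : ℕ,
      (interior (closure (e n))).Nonempty ∧ interior (closure (e n)) ⊆ U
  · -- countable π-base of open sets, hence countable base
    have hB : (𝓝 (1 : G)).HasBasis
        (fun n => interior (closure (e n)) * (interior (closure (e n)))⁻¹ ∈ 𝓝 (1 : G))
        (fun n => interior (closure (e n)) * (interior (closure (e n)))⁻¹) := by
      constructor
      intro t
      constructor
      · intro ht
        obtain ⟨V, hV, hVt⟩ := exists_nhds_split_inv ht
        obtain ⟨n, hne, hsubV⟩ := hQ V hV
        set P := interior (closure (e n)) with hPdef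
        have hPopen : IsOpen P := isOpen_interior
        have h1P : (1 : G) ∈ P * P⁻¹ := by
          obtain ⟨x, hx⟩ := hne
          have : x * x⁻¹ ∈ P * P⁻¹ := Set.mul_mem_mul hx (Set.inv_mem_inv.mpr hx)
          simpa using this
        have hPP : P * P⁻¹ ⊆ t := by
          rintro z ⟨a, ha, b, hb, rfl⟩
          have hb' : b⁻¹ ∈ P := Set.mem_inv.mp hb
          have := hVt a (hsubV ha) b⁻¹ (hsubV hb')
          simpa [div_eq_mul_inv] using this
        exact ⟨n, (hPopen.mul_right.mem_nhds h1P), hPP⟩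
      · rintro ⟨n, hn, hsub⟩
        exact mem_of_superset hn hsub
    exact hB.isCountablyGenerated
  · -- every network element inside a suitable U₀ is nowhere dense; contradiction with Pytkeev
    exfalso
    push_neg at hQ
    obtain ⟨U₂, hU₂mem, hU₂⟩ := hQ
    obtain ⟨V₂, hV₂mem, hV₂closed, hV₂sub⟩ := exists_mem_nhds_isClosed_subset hU₂mem
    set U₀ := interior V₂ with hU₀def
    have hU₀open : IsOpen U₀ := isOpen_interior
    have h1U₀ : (1 : G) ∈ U₀ := mem_interior_iff_mem_nhds.mpr hV₂mem
    have key : ∀ n : ℕ, e n ⊆ U₀ → interior (closure (e n)) = ∅ := by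
      intro n hn
      by_contra h
      have hne : (interior (closure (e n))).Nonempty := nonempty_iff_ne_empty.mpr h
      refine absurd ?_ (hU₂ n hne)
      have hclos : closure (e n) ⊆ V₂ :=
        closure_minimal (hn.trans interior_subset) hV₂closed
      exact (interior_subset.trans hclos).trans hV₂sub
    -- nowhere dense building blocks
    set T : ℕ → Set G := fun k =>
      if e k ⊆ U₀ then closure (e k) ∪ (closure (e k))⁻¹ else ∅ with hTdef
    have hTclosed : ∀ k, IsClosed (T k) := by
      intro k
      by_cases hk : e k ⊆ U₀
      · simp only [hTdef, if_pos hk]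
        exact isClosed_closure.union isClosed_closure.inv
      · simp only [hTdef, if_neg hk]
        exact isClosed_empty
    have hinvint : ∀ s : Set G, interior s = ∅ → interior s⁻¹ = ∅ := by
      intro s hs
      by_contra h
      obtain ⟨x, hx⟩ := nonempty_iff_ne_empty.mpr h
      have hopen : IsOpen (interior s⁻¹)⁻¹ := isOpen_interior.inv
      have hsub2 : (interior s⁻¹)⁻¹ ⊆ s := by
        intro y hy
        have : y⁻¹ ∈ interior s⁻¹ := Set.mem_inv.mp hy
        have := interior_subset this
        simpa using this
      have : (interior s⁻¹)⁻¹ ⊆ interior s := interior_maximal hsub2 hopen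
      rw [hs] at this
      exact this (Set.inv_mem_inv.mpr hx)
    have hTint : ∀ k, interior (T k) = ∅ := by
      intro k
      by_cases hk : e k ⊆ U₀
      · simp only [hTdef, if_pos hk]
        exact interior_union_eq_empty' isClosed_closure (key k hk) (hinvint _ (key k hk))
      · simp only [hTdef, if_neg hk]
        exact interior_empty
    have hTsymm : ∀ k, (T k)⁻¹ = T k := by
      intro k
      by_cases hk : e k ⊆ U₀
      · simp only [hTdef, if_pos hk]
        rw [Set.union_inv, inv_inv, Set.union_comm]
      · simp only [hTdef, if_neg hk]
        exact Set.inv_empty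
    set S : ℕ → Set G := fun j => ⋃ k ∈ Finset.range (j + 1), T k with hSdef
    have hS : ∀ j, IsClosed (S j) ∧ interior (S j) = ∅ := fun j =>
      interior_biUnion_finset_empty _ _ (fun i _ => hTclosed i) (fun i _ => hTint i)
    have hTS : ∀ k j, k ≤ j → T k ⊆ S j := by
      intro k j hkj
      exact subset_biUnion_of_mem (u := fun k => T k) (Finset.mem_range.mpr (Nat.lt_succ_of_le hkj))
    -- the choice function
    have hH : ∀ l : List G, ∃ x : G, x ∉ l ∧ ∀ y ∈ l, x ∉ y • S l.length := by
      intro l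
      set n := l.length
      set B : Set G := {y | y ∈ l} ∪ ⋃ y ∈ l.toFinset, y • S n with hBdef
      have hlfin : ({y | y ∈ l} : Set G).Finite := l.finite_toSet
      have hlint : interior ({y | y ∈ l} : Set G) = ∅ := by
        by_contra h
        obtain ⟨x, hx⟩ := nonempty_iff_ne_empty.mpr h
        have hinf := hOpenInf _ isOpen_interior ⟨x, hx⟩
        exact hinf (hlfin.subset interior_subset)
      have hyint : ∀ y : G, interior (y • S n) = ∅ := by
        intro y
        by_contra h
        obtain ⟨x, hx⟩ := nonempty_iff_ne_empty.mpr h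
        have hopen : IsOpen (y⁻¹ • interior (y • S n)) := isOpen_interior.smul y⁻¹
        have hsub2 : y⁻¹ • interior (y • S n) ⊆ S n := by
          rintro z ⟨w, hw, rfl⟩
          have hw2 : w ∈ y • S n := interior_subset hw
          exact (mem_smul_set_iff_inv_smul_mem).mp hw2
        have := interior_maximal hsub2 hopen
        rw [(hS n).2] at this
        exact this ⟨x, hx, rfl⟩
      have hbiun := interior_biUnion_finset_empty l.toFinset (fun y => y • S n)
        (fun y _ => (hS n).1.smul y) (fun y _ => hyint y)
      have hBclosed : IsClosed B := (hlfin.isClosed).union hbiun.1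
      have hBint : interior B = ∅ :=
        interior_union_eq_empty' hlfin.isClosed hlint hbiun.2
      have hBne : B ≠ univ := by
        intro h
        rw [h, interior_univ] at hBint
        exact (univ_nonempty (α := G)).ne_empty hBint
      obtain ⟨x, hx⟩ := nonempty_compl.mpr hBne
      rw [hBdef] at hx
      simp only [mem_compl_iff, mem_union, not_or, mem_setOf_eq, mem_iUnion, not_exists] at hx
      exact ⟨x, hx.1, fun y hy => hx.2 y (List.mem_toFinset.mpr hy)⟩
    obtain ⟨d, hinj, havoid⟩ := exists_avoiding_seq (fun j y => y • S j) hH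
    set D : Set G := Set.range d with hDdef
    have hDinf : D.Infinite := Set.infinite_range_of_injective hinj
    set A : Set G := {x | ∃ a ∈ D, ∃ b ∈ D, a⁻¹ * b = x} with hAdef
    have hA : AccumulatesAt A (1 : G) := accumulates_diff hpre D hDinf
    obtain ⟨N, hN𝒩, hNsub, hNA⟩ := hpyt 1 U₀ hU₀open h1U₀ A hA
    obtain ⟨k, hk⟩ : ∃ k, e k = N := by
      rw [he] at hN𝒩
      exact hN𝒩
    -- N ∩ A is finite: contradiction
    have hNT : N ∪ N⁻¹ ⊆ T k := by
      have hek : e k ⊆ U₀ := hk ▸ hNsub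
      simp only [hTdef, if_pos hek, hk]
      exact Set.union_subset_union subset_closure (Set.inv_subset_inv.mpr subset_closure)
    have hfinNA : (N ∩ A).Finite := by
      have hfin2 : (({1} : Set G) ∪
          (fun q : ℕ × ℕ => (d q.1)⁻¹ * d q.2) '' (Iio k ×ˢ Iio k)).Finite :=
        (Set.finite_singleton 1).union (((Set.finite_Iio k).prod (Set.finite_Iio k)).image _)
      refine hfin2.subset ?_
      rintro x ⟨hxN, a, ⟨i, rfl⟩, b, ⟨j, rfl⟩, rfl⟩
      rcases eq_or_ne i j with rfl | hij
      · left; simp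
      · right
        have hmax : max i j < k := by
          by_contra hge
          push_neg at hge
          have hlm : min i j < max i j := by
            rcases hij.lt_or_gt with h | h
            · simp [min_eq_left h.le, max_eq_right h.le, h]
            · simp [min_eq_right h.le, max_eq_left h.le, h]
          have hav := havoid (min i j) (max i j) hlm
          have hmemS : (d (min i j))⁻¹ * d (max i j) ∉ S (max i j) := by
            intro hmem
            exact hav ((mem_smul_set_iff_inv_smul_mem).mpr (by simpa using hmem))
          have hTkS : T k ⊆ S (max i j) := hTS k (max i j) hge
          rcases hij.lt_or_gt with h | h
          · -- i < j : min = i, max = j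
            have hmm : (d i)⁻¹ * d j ∈ T k := hNT (Or.inl hxN)
            rw [min_eq_left h.le, max_eq_right h.le] at hmemS
            rw [max_eq_right h.le] at hTkS
            exact hmemS (hTkS hmm)
          · -- j < i : min = j, max = i
            have hxinv : ((d i)⁻¹ * d j)⁻¹ ∈ T k := by
              rw [← hTsymm k]
              exact Set.inv_mem_inv.mpr (hNT (Or.inl hxN))
            have hmm : (d j)⁻¹ * d i ∈ T k := by simpa [mul_inv_rev] using hxinv
            rw [min_eq_right h.le, max_eq_left h.le] at hmemS
            rw [max_eq_left h.le] at hTkS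
            exact hmemS (hTkS hmm)
        exact ⟨(i, j), ⟨lt_of_le_of_lt (le_max_left i j) hmax,
          lt_of_le_of_lt (le_max_right i j) hmax⟩, rfl⟩
    exact hNA hfinNA

end Main2

theorem precompactGroup_metrizable_separable' {G : Type*} [Group G] [TopologicalSpace G]
    [IsTopologicalGroup G] [T3Space G]
    (hpre : ∀ U ∈ 𝓝 (1 : G), ∃ F : Set G, F.Finite ∧
      ∀ g : G, ∃ f ∈ F, ∃ u ∈ U, g = f * u)
    (h𝒩 : ∃ 𝒩 : Set (Set G), 𝒩.Countable ∧ IsPytkeevNetwork 𝒩) :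
    MetrizableSpace G ∧ SeparableSpace G := by
  classical
  obtain ⟨𝒩, hc, hP⟩ := h𝒩
  constructor
  · -- metrizable
    haveI hcg : (𝓝 (1 : G)).IsCountablyGenerated :=
      nhds_one_isCountablyGenerated hpre 𝒩 hc hP
    letI : UniformSpace G := IsTopologicalGroup.rightUniformSpace G
    haveI : (𝓤 G).IsCountablyGenerated := Filter.comap.isCountablyGenerated _ _
    exact UniformSpace.metrizableSpace
  · -- separable
    refine ⟨⟨(fun N => if h : N.Nonempty then h.some else 1) '' 𝒩, hc.image _, ?_⟩⟩
    rw [dense_iff_inter_open]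
    rintro U hU ⟨x, hx⟩
    obtain ⟨N, hN, hxN, hNU⟩ := hP.1 x U hU hx
    have hNne : N.Nonempty := ⟨x, hxN⟩
    refine ⟨(fun N => if h : N.Nonempty then h.some else 1) N, ?_, ⟨N, hN, rfl⟩⟩
    show (if h : N.Nonempty then h.some else 1) ∈ U
    rw [dif_pos hNne]
    exact hNU hNne.some_mem


/-- A precompact (totally bounded) topological group with a countable Pytkeev network
is metrizable and separable. -/
theorem precompactGroup_metrizable_separable {G : Type*} [Group G] [TopologicalSpace G]
    [IsTopologicalGroup G] [T3Space G]
    (hpre : ∀ U ∈ 𝓝 (1 : G), ∃ F : Set G, F.Finite ∧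
      ∀ g : G, ∃ f ∈ F, ∃ u ∈ U, g = f * u)
    (h𝒩 : ∃ 𝒩 : Set (Set G), 𝒩.Countable ∧ IsPytkeevNetwork 𝒩) :
    MetrizableSpace G ∧ SeparableSpace G :=
  precompactGroup_metrizable_separable' hpre h𝒩
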